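/- Any diagonal unitary Λ(χ) = ∑_{c=0}^{2^n−1} e^{iχ_c} |c⟩⟨c| factors as a global phase e^{iY_0} times a product over nonzero ω of diagonal operators ∑_c e^{i·Y_ω·[c·ω=1]} |c⟩⟨c|, where X_ω = ∑_i (−1)^{ω·i} χ_i, Y_0 = (1/2^n)∑_ω X_ω, Y_ω = −(2/2^n)X_ω for ω ≠ 0. -/

import Mathlib

open Matrix Complex

/-- Mod-2 inner product of the `n`-bit binary expansions of `a` and `b`. -/
def bip (n a b : ℕ) : ℕ :=
  (∑ j ∈ Finset.range n, (Nat.testBit a j && Nat.testBit b j).toNat) % 2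

/-- `(-1)^{a·b}` as a real sign. -/
def wsignR (n a b : ℕ) : ℝ :=
  (-1) ^ (∑ j ∈ Finset.range n, (Nat.testBit a j && Nat.testBit b j).toNat)

private lemma negpow_mod (a : ℕ) : (-1:ℝ)^a = (-1:ℝ)^(a % 2) := by
  conv_lhs => rw [← Nat.div_add_mod a 2]
  rw [pow_add, pow_mul]
  norm_num

private lemma negpow_congr {a b : ℕ} (h : a % 2 = b % 2) : (-1:ℝ)^a = (-1:ℝ)^b := by
  rw [negpow_mod a, negpow_mod b, h]

private lemma wsign_eq_one_sub (n a b : ℕ) :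
    wsignR n a b = 1 - 2 * (bip n a b : ℝ) := by
  unfold wsignR bip
  rw [negpow_mod]
  rcases Nat.mod_two_eq_zero_or_one (∑ j ∈ Finset.range n, (Nat.testBit a j && Nat.testBit b j).toNat) with h | h <;>
    rw [h] <;> norm_num

private lemma wsign_symm (n a b : ℕ) : wsignR n a b = wsignR n b a := by
  unfold wsignR
  congr 1
  exact Finset.sum_congr rfl fun j _ => by rw [Bool.and_comm]

private lemma wsign_mul (n a b c : ℕ) :
    wsignR n a b * wsignR n a c = wsignR n a (b ^^^ c) := by
  unfold wsignR
  rw [← pow_add]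
  apply negpow_congr
  have h : (((∑ j ∈ Finset.range n, (Nat.testBit a j && Nat.testBit b j).toNat)
      + ∑ j ∈ Finset.range n, (Nat.testBit a j && Nat.testBit c j).toNat : ℕ) : ZMod 2)
      = ((∑ j ∈ Finset.range n, (Nat.testBit a j && Nat.testBit (b ^^^ c) j).toNat : ℕ) : ZMod 2) := by
    push_cast
    rw [← Finset.sum_add_distrib]
    refine Finset.sum_congr rfl fun j _ => ?_
    rw [Nat.testBit_xor]
    cases Nat.testBit a j <;> cases Nat.testBit b j <;> cases Nat.testBit c j <;> decide
  exact (ZMod.natCast_eq_natCast_iff _ _ 2).mp h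

private lemma sum_range_two_mul {M : Type*} [AddCommMonoid M] (m : ℕ) (f : ℕ → M) :
    ∑ i ∈ Finset.range (2 * m), f i = ∑ q ∈ Finset.range m, (f (2 * q) + f (2 * q + 1)) := by
  induction m with
  | zero => simp
  | succ m ih =>
    have : 2 * (m + 1) = (2 * m + 1) + 1 := by ring
    rw [this, Finset.sum_range_succ, Finset.sum_range_succ, ih, Finset.sum_range_succ]
    rw [add_assoc]

private lemma wsign_split (n a b : ℕ) :
    wsignR (n+1) a b
      = (-1:ℝ)^((Nat.testBit a 0 && Nat.testBit b 0).toNat) * wsignR n (a/2) (b/2) := by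
  unfold wsignR
  rw [Finset.sum_range_succ', pow_add]
  rw [mul_comm]
  congr 2
  exact Finset.sum_congr rfl fun j _ => by rw [Nat.testBit_succ, Nat.testBit_succ]

private lemma orth (n : ℕ) : ∀ d : ℕ, d < 2 ^ n →
    ∑ ω ∈ Finset.range (2 ^ n), wsignR n ω d = if d = 0 then (2 ^ n : ℝ) else 0 := by
  induction n with
  | zero =>
    intro d hd
    interval_cases d
    simp [wsignR]
  | succ n ih =>
    intro d hd
    have h2 : (2 : ℕ) ^ (n + 1) = 2 * 2 ^ n := by ring
    rw [h2, sum_range_two_mul]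
    have key : ∀ q : ℕ, wsignR (n+1) (2*q) d + wsignR (n+1) (2*q+1) d
        = (1 + (-1:ℝ)^((Nat.testBit d 0).toNat)) * wsignR n q (d/2) := by
      intro q
      rw [wsign_split, wsign_split]
      have e1 : Nat.testBit (2*q) 0 = false := by
        simp [Nat.testBit_zero, Nat.mul_mod_right]
      have e2 : Nat.testBit (2*q+1) 0 = true := by
        simp [Nat.testBit_zero, Nat.add_mul_mod_self_left, Nat.mul_add_mod]
      have e3 : (2*q)/2 = q := by omega
      have e4 : (2*q+1)/2 = q := by omega
      rw [e1, e2, e3, e4]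
      cases Nat.testBit d 0 <;> simp <;> ring
    simp_rw [key]
    rw [← Finset.mul_sum]
    have hd2 : d / 2 < 2 ^ n := by
      rw [h2] at hd; omega
    rw [ih (d/2) hd2]
    by_cases h0 : d = 0
    · subst h0
      simp only [if_pos rfl, Nat.zero_div, Nat.zero_testBit, Bool.toNat_false, pow_zero]
      push_cast
      ring
    · simp only [if_neg h0]
      rcases Nat.even_or_odd d with he | ho
      · have hb : Nat.testBit d 0 = false := by
          rcases he with ⟨k, hk⟩
          subst hk
          simp [Nat.testBit_zero]
          omega
        have : d / 2 ≠ 0 := by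
          rcases he with ⟨k, hk⟩; omega
        rw [if_neg this, hb]
        norm_num
      · have hb : Nat.testBit d 0 = true := by
          rcases ho with ⟨k, hk⟩
          subst hk
          simp [Nat.testBit_zero, Nat.add_mul_mod_self_left, Nat.mul_add_mod]
        rw [hb]
        norm_num

private lemma bip_zero_right (n c : ℕ) : bip n c 0 = 0 := by
  simp [bip]

private lemma diag_list_prod {m : ℕ} (l : List (Fin m)) (f : Fin m → Fin m → ℂ) :
    (l.map (fun a => Matrix.diagonal (f a))).prod
      = Matrix.diagonal (fun c => (l.map (fun a => f a c)).prod) := by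
  induction l with
  | nil => simp [← Matrix.diagonal_one]
  | cons a t ih =>
    simp [ih, Matrix.diagonal_mul_diagonal]

private lemma filter_map_sum {α M : Type*} [AddCommMonoid M] (l : List α) (p : α → Prop)
    [DecidablePred p] (g : α → M) :
    ((l.filter (fun a => decide (p a))).map g).sum
      = (l.map (fun a => if p a then g a else 0)).sum := by
  induction l with
  | nil => simp
  | cons a t ih =>
    by_cases h : p a <;> simp [List.filter_cons, h, ih]

/-- any diagonal unitary `Λ(χ) = ∑_c e^{iχ_c}|c⟩⟨c|` factors as the
global phase `e^{iY_0}` times the product over nonzero `ω` of the diagonal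
operators `∑_c e^{i Y_ω [c·ω = 1]} |c⟩⟨c|`, with `X_ω = ∑_i (−1)^{ω·i} χ_i`,
`Y_0 = (1/2^n) ∑_ω X_ω`, `Y_ω = −(2/2^n) X_ω` for `ω ≠ 0`. -/
theorem stmt10 {n : ℕ} (χ X Y : Fin (2 ^ n) → ℝ)
    (hX : ∀ ω : Fin (2 ^ n), X ω = ∑ i : Fin (2 ^ n), wsignR n (ω : ℕ) (i : ℕ) * χ i)
    (hY0 : Y 0 = (2 ^ n : ℝ)⁻¹ * ∑ ω : Fin (2 ^ n), X ω)
    (hY : ∀ ω : Fin (2 ^ n), ω ≠ 0 → Y ω = -(2 / 2 ^ n : ℝ) * X ω) :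
    Matrix.diagonal (fun c : Fin (2 ^ n) => Complex.exp (Complex.I * (χ c : ℂ))) =
      Complex.exp (Complex.I * (Y 0 : ℂ)) •
        (((List.finRange (2 ^ n)).filter (fun ω => ω ≠ 0)).map
          (fun ω : Fin (2 ^ n) =>
            Matrix.diagonal (fun c : Fin (2 ^ n) =>
              Complex.exp (Complex.I * (Y ω : ℂ) * (bip n (c : ℕ) (ω : ℕ) : ℂ))))).prod := by
  have hN : (0:ℕ) < 2 ^ n := Nat.two_pow_pos n
  -- scalar real identity
  have key : ∀ c : Fin (2 ^ n),
      Y 0 + ∑ ω : Fin (2 ^ n), (if ω ≠ 0 then Y ω * (bip n (c:ℕ) (ω:ℕ) : ℝ) else 0) = χ c := by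
    intro c
    have step1 : ∀ ω : Fin (2^n), (if ω ≠ 0 then Y ω * (bip n (c:ℕ) (ω:ℕ) : ℝ) else 0)
        = -(2 / 2 ^ n : ℝ) * X ω * (bip n (c:ℕ) (ω:ℕ) : ℝ) := by
      intro ω
      by_cases h : ω = 0
      · subst h
        simp [bip_zero_right]
      · rw [if_pos h, hY ω h]
    simp_rw [step1, hY0]
    have comb : ∀ ω : Fin (2^n),
        (2 ^ n : ℝ)⁻¹ * X ω + -(2 / 2 ^ n : ℝ) * X ω * (bip n (c:ℕ) (ω:ℕ) : ℝ)
          = (2 ^ n : ℝ)⁻¹ * (X ω * wsignR n (c:ℕ) (ω:ℕ)) := by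
      intro ω
      rw [wsign_eq_one_sub]
      field_simp
      ring
    rw [Finset.mul_sum, ← Finset.sum_add_distrib]
    simp_rw [comb]
    rw [← Finset.mul_sum]
    have inner : ∀ i : Fin (2^n),
        ∑ ω : Fin (2^n), (wsignR n (ω:ℕ) (i:ℕ) * χ i) * wsignR n (c:ℕ) (ω:ℕ)
          = if i = c then (2:ℝ)^n * χ i else 0 := by
      intro i
      have e : ∀ ω : Fin (2^n), (wsignR n (ω:ℕ) (i:ℕ) * χ i) * wsignR n (c:ℕ) (ω:ℕ)
          = χ i * wsignR n (ω:ℕ) ((i:ℕ) ^^^ (c:ℕ)) := by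
        intro ω
        rw [wsign_symm n (c:ℕ) (ω:ℕ), ← wsign_mul]
        ring
      simp_rw [e]
      rw [← Finset.mul_sum]
      have hlt : (i:ℕ) ^^^ (c:ℕ) < 2 ^ n := Nat.xor_lt_two_pow i.isLt c.isLt
      have := orth n ((i:ℕ) ^^^ (c:ℕ)) hlt
      rw [Fin.sum_univ_eq_sum_range (fun ω => wsignR n ω ((i:ℕ) ^^^ (c:ℕ))), this]
      by_cases h : i = c
      · subst h
        simp [mul_comm]
      · have : (i:ℕ) ^^^ (c:ℕ) ≠ 0 := by
          rw [Ne, xor_eq_zero_iff]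
          exact fun hh => h (Fin.ext hh)
        rw [if_neg this, if_neg h, mul_zero]
    calc (2 ^ n : ℝ)⁻¹ * ∑ ω : Fin (2^n), X ω * wsignR n (c:ℕ) (ω:ℕ)
        = (2 ^ n : ℝ)⁻¹ * ∑ ω : Fin (2^n), ∑ i : Fin (2^n),
            (wsignR n (ω:ℕ) (i:ℕ) * χ i) * wsignR n (c:ℕ) (ω:ℕ) := by
          congr 1
          refine Finset.sum_congr rfl fun ω _ => ?_
          rw [hX ω, Finset.sum_mul]
      _ = (2 ^ n : ℝ)⁻¹ * ∑ i : Fin (2^n), ∑ ω : Fin (2^n),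
            (wsignR n (ω:ℕ) (i:ℕ) * χ i) * wsignR n (c:ℕ) (ω:ℕ) := by
          rw [Finset.sum_comm]
      _ = (2 ^ n : ℝ)⁻¹ * ∑ i : Fin (2^n), (if i = c then (2:ℝ)^n * χ i else 0) := by
          congr 1
          exact Finset.sum_congr rfl fun i _ => inner i
      _ = χ c := by
          rw [Finset.sum_ite_eq' Finset.univ c (fun i => (2:ℝ)^n * χ i)]
          simp only [Finset.mem_univ, if_pos]
          rw [← mul_assoc, inv_mul_cancel₀ (by positivity), one_mul]
  -- matrix side
  rw [diag_list_prod, ← Matrix.diagonal_smul]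
  apply congrArg Matrix.diagonal
  funext c
  simp only [Pi.smul_apply, smul_eq_mul]
  have h1 : List.map (fun a : Fin (2^n) => Complex.exp (Complex.I * (Y a : ℂ) * (bip n (c:ℕ) (a:ℕ) : ℂ)))
        ((List.finRange (2 ^ n)).filter (fun ω => ω ≠ 0))
      = List.map Complex.exp (List.map (fun a : Fin (2^n) => Complex.I * (Y a : ℂ) * (bip n (c:ℕ) (a:ℕ) : ℂ))
        ((List.finRange (2 ^ n)).filter (fun ω => ω ≠ 0))) := by
    rw [List.map_map]
    rfl
  rw [h1, ← Complex.exp_list_sum, ← Complex.exp_add]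
  have e1 : (List.map (fun a : Fin (2^n) => Complex.I * (Y a : ℂ) * (bip n (c:ℕ) (a:ℕ) : ℂ))
        ((List.finRange (2 ^ n)).filter (fun ω => ω ≠ 0))).sum
      = ∑ ω : Fin (2^n), (if ω ≠ 0 then Complex.I * (Y ω : ℂ) * (bip n (c:ℕ) (ω:ℕ) : ℂ) else 0) := by
    rw [filter_map_sum (List.finRange (2 ^ n)) (fun ω => ω ≠ 0)
      (fun a : Fin (2^n) => Complex.I * (Y a : ℂ) * (bip n (c:ℕ) (a:ℕ) : ℂ)), Fin.sum_univ_def]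
  have e2 : ∑ ω : Fin (2^n), (if ω ≠ 0 then Complex.I * (Y ω : ℂ) * (bip n (c:ℕ) (ω:ℕ) : ℂ) else 0)
      = Complex.I * ((∑ ω : Fin (2^n), if ω ≠ 0 then Y ω * (bip n (c:ℕ) (ω:ℕ) : ℝ) else 0 : ℝ) : ℂ) := by
    rw [Complex.ofReal_sum, Finset.mul_sum]
    refine Finset.sum_congr rfl fun ω _ => ?_
    by_cases h : ω = 0 <;> simp [h] <;> push_cast <;> ring
  rw [e1, e2]
  congr 1
  rw [← key c]
  push_cast
  ring
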